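/- Let L be a full-rank lattice in ℝ², i.e. the ℤ-span of an ℝ-basis of ℝ². If Q is a linear isometry of ℝ² (an element of the orthogonal group O(2)) that maps L onto itself, then Q has finite order, and its order is 1, 2, 3, 4, or 6. -/

import Mathlib

open scoped RealInnerProductSpace

/-- Cayley–Hamilton for 2×2 real matrices. -/
private lemma ch_fin_two (M : Matrix (Fin 2) (Fin 2) ℝ) :
    M * M = M.trace • M - M.det • (1 : Matrix (Fin 2) (Fin 2) ℝ) := by
  ext i j
  fin_cases i <;> fin_cases j <;>
    simp [Matrix.mul_apply, Fin.sum_univ_two, Matrix.trace_fin_two, Matrix.det_fin_two,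
      Matrix.one_apply] <;> ring

private lemma order_mem_aux {G : Type*} [Group G] {Q : G} {n : ℕ}
    (hn : n = 1 ∨ n = 2 ∨ n = 3 ∨ n = 4 ∨ n = 6) (hpow : Q ^ n = 1) :
    IsOfFinOrder Q ∧ orderOf Q ∈ ({1, 2, 3, 4, 6} : Set ℕ) := by
  have hn0 : 0 < n := by omega
  have hfin : IsOfFinOrder Q := isOfFinOrder_iff_pow_eq_one.mpr ⟨n, hn0, hpow⟩
  refine ⟨hfin, ?_⟩
  have hd : orderOf Q ∣ n := orderOf_dvd_of_pow_eq_one hpow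
  have h0 : orderOf Q ≠ 0 := by
    have := hfin.orderOf_pos; omega
  simp only [Set.mem_insert_iff, Set.mem_singleton_iff]
  generalize orderOf Q = k at h0 hd ⊢
  rcases hn with rfl | rfl | rfl | rfl | rfl <;>
    (have hle : k ≤ 6 := le_trans (Nat.le_of_dvd (by omega) hd) (by omega)
     interval_cases k <;> omega)

/-- Crystallographic restriction in the plane: a linear isometry of `ℝ²`
mapping a full-rank lattice onto itself has finite order `1`, `2`, `3`, `4`, or `6`. -/
theorem crystallographic_restriction_O2_lattice
    (b : Module.Basis (Fin 2) ℝ (EuclideanSpace ℝ (Fin 2)))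
    (L : Submodule ℤ (EuclideanSpace ℝ (Fin 2)))
    (hL : L = Submodule.span ℤ (Set.range b))
    (Q : EuclideanSpace ℝ (Fin 2) ≃ₗᵢ[ℝ] EuclideanSpace ℝ (Fin 2))
    (hQ : Q '' (L : Set (EuclideanSpace ℝ (Fin 2))) = (L : Set (EuclideanSpace ℝ (Fin 2)))) :
    IsOfFinOrder Q ∧ orderOf Q ∈ ({1, 2, 3, 4, 6} : Set ℕ) := by
  classical
  set E := EuclideanSpace ℝ (Fin 2)
  set ob := EuclideanSpace.basisFun (Fin 2) ℝ with hob
  set e : Module.Basis (Fin 2) ℝ E := ob.toBasis with he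
  set f : E →ₗ[ℝ] E := Q.toLinearEquiv.toLinearMap with hf
  have hfapply : ∀ x : E, f x = Q x := fun x => rfl
  set B : Matrix (Fin 2) (Fin 2) ℝ := LinearMap.toMatrixAlgEquiv e f with hB
  -- Entries of B
  have hBij : ∀ i j, B i j = (Q (e j)) i := by
    intro i j
    rw [hB, LinearMap.toMatrixAlgEquiv_apply, hfapply]
    rw [he, ob.coe_toBasis_repr_apply]
    rfl
  -- Q maps L into L
  have hQL : ∀ x ∈ L, Q x ∈ L := by
    intro x hx
    have : Q x ∈ Q '' (L : Set E) := ⟨x, hx, rfl⟩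
    rwa [hQ] at this
  -- integer coordinates on the lattice
  have hint : ∀ x ∈ L, ∀ i, ∃ n : ℤ, b.repr x i = n := by
    intro x hx i
    rw [hL] at hx
    induction hx using Submodule.span_induction with
    | mem y hy =>
        obtain ⟨j, rfl⟩ := hy
        by_cases hij : i = j
        · exact ⟨1, by simp [hij]⟩
        · exact ⟨0, by simp [Ne.symm hij, Finsupp.single_apply, hij]⟩
    | zero => exact ⟨0, by simp⟩
    | add y z hy hz ihy ihz =>
        obtain ⟨m, hm⟩ := ihy; obtain ⟨n, hn⟩ := ihz
        exact ⟨m + n, by push_cast; simp [hm, hn]⟩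
    | smul a y hy ihy =>
        obtain ⟨m, hm⟩ := ihy
        refine ⟨a * m, ?_⟩
        have h2 : b.repr ((a : ℤ) • y) = (a : ℤ) • b.repr y := map_zsmul _ _ _
        rw [h2]
        simp only [Finsupp.smul_apply, hm, zsmul_eq_mul]
        push_cast
        ring
  -- trace of B is an integer
  have htrace_int : ∃ m : ℤ, B.trace = m := by
    set A : Matrix (Fin 2) (Fin 2) ℝ := LinearMap.toMatrixAlgEquiv b f with hA
    have hAij : ∀ i j, ∃ n : ℤ, A i j = n := by
      intro i j
      rw [hA, LinearMap.toMatrixAlgEquiv_apply, hfapply]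
      exact hint _ (hQL _ (by rw [hL]; exact Submodule.subset_span ⟨j, rfl⟩)) i
    have htr : B.trace = A.trace := by
      rw [hB, hA, LinearMap.toMatrixAlgEquiv, LinearMap.toMatrixAlgEquiv]
      simp only [AlgEquiv.ofLinearEquiv_apply]
      rw [← LinearMap.trace_eq_matrix_trace ℝ e f, ← LinearMap.trace_eq_matrix_trace ℝ b f]
    obtain ⟨m0, hm0⟩ := hAij 0 0
    obtain ⟨m1, hm1⟩ := hAij 1 1
    exact ⟨m0 + m1, by rw [htr, Matrix.trace_fin_two, hm0, hm1]; push_cast; ring⟩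
  -- orthogonality: B.transpose * B = 1
  have hinner : ∀ x y : E, ⟪x, y⟫ = x 0 * y 0 + x 1 * y 1 := by
    intro x y
    rw [PiLp.inner_apply, Fin.sum_univ_two]
    simp [RCLike.inner_apply, conj_trivial]; ring
  have horthn : Orthonormal ℝ (⇑e) := by rw [he, ob.coe_toBasis]; exact ob.orthonormal
  have horth : B.transpose * B = 1 := by
    ext j k
    rw [Matrix.mul_apply, Fin.sum_univ_two]
    simp only [Matrix.transpose_apply, hBij]
    have : (Q (e j)) 0 * (Q (e k)) 0 + (Q (e j)) 1 * (Q (e k)) 1 = ⟪Q (e j), Q (e k)⟫ :=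
      (hinner _ _).symm
    rw [this, Q.inner_map_map, orthonormal_iff_ite.mp horthn j k, Matrix.one_apply]
  -- column norms
  have hcol : ∀ j, B 0 j ^ 2 + B 1 j ^ 2 = 1 := by
    intro j
    have := congrFun (congrFun horth j) j
    rw [Matrix.mul_apply, Fin.sum_univ_two] at this
    simp only [Matrix.transpose_apply, Matrix.one_apply_eq] at this
    nlinarith [this]
  have hd00 : -1 ≤ B 0 0 ∧ B 0 0 ≤ 1 := by
    constructor <;> nlinarith [hcol 0, sq_nonneg (B 1 0)]
  have hd11 : -1 ≤ B 1 1 ∧ B 1 1 ≤ 1 := by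
    constructor <;> nlinarith [hcol 1, sq_nonneg (B 0 1)]
  -- determinant is ±1
  have hdet : B.det = 1 ∨ B.det = -1 := by
    have h1 : B.det * B.det = 1 := by
      have := congrArg Matrix.det horth
      rwa [Matrix.det_mul, Matrix.det_transpose, Matrix.det_one] at this
    rcases mul_self_eq_one_iff.mp h1 with h | h
    · exact Or.inl h
    · exact Or.inr h
  -- Cayley–Hamilton
  have hCH : B * B = B.trace • B - B.det • 1 := ch_fin_two B
  -- trace bound
  obtain ⟨m, hm⟩ := htrace_int
  have htr2 : B.trace = B 0 0 + B 1 1 := Matrix.trace_fin_two B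
  have hmle : -2 ≤ m ∧ m ≤ 2 := by
    have : (-2 : ℝ) ≤ (m : ℝ) ∧ (m : ℝ) ≤ 2 := by
      constructor <;> rw [← hm, htr2] <;> linarith [hd00.1, hd00.2, hd11.1, hd11.2]
    exact ⟨by exact_mod_cast this.1, by exact_mod_cast this.2⟩
  -- key lemma: powers of Q from powers of B
  have hQfpow : ∀ (n : ℕ) (x : E), (Q ^ n) x = (f ^ n) x := by
    intro n
    induction n with
    | zero => intro x; simp
    | succ k ih =>
        intro x
        rw [pow_succ, pow_succ]
        have h3 : (Q ^ k * Q) x = (Q ^ k) (Q x) := rfl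
        rw [h3, ih (Q x)]
        simp [Module.End.mul_apply, hfapply]
  have hpowQ : ∀ n : ℕ, B ^ n = 1 → Q ^ n = 1 := by
    intro n hBn
    have hfn : f ^ n = 1 := by
      have : LinearMap.toMatrixAlgEquiv e (f ^ n) = LinearMap.toMatrixAlgEquiv e 1 := by
        rw [map_pow, map_one, ← hB, hBn]
      exact (LinearMap.toMatrixAlgEquiv e).injective this
    refine LinearIsometryEquiv.ext fun x => ?_
    have h4 := hQfpow n x
    rw [hfn] at h4
    simpa using h4
  -- Case on determinant
  obtain ⟨hm1, hm2⟩ := hmle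
  rcases hdet with hd | hd
  · -- rotation case
    rw [hd] at hCH
    interval_cases m
    · -- trace = -2 : B = -1
      have h00 : B 0 0 = -1 := by
        have h5 : B 0 0 + B 1 1 = -2 := by rw [← htr2, hm]; norm_num
        linarith [hd00.1, hd11.1]
      have h11 : B 1 1 = -1 := by
        have h5 : B 0 0 + B 1 1 = -2 := by rw [← htr2, hm]; norm_num
        linarith [hd00.1, hd11.1]
      have h10 : B 1 0 = 0 := by nlinarith [hcol 0]
      have h01 : B 0 1 = 0 := by nlinarith [hcol 1]
      have hBeq : B = -1 := by
        ext i j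
        fin_cases i <;> fin_cases j <;>
          simp [h00, h11, h10, h01, Matrix.one_apply]
      have hpow : Q ^ 2 = 1 := hpowQ 2 (by rw [pow_two, hBeq]; simp)
      exact order_mem_aux (by norm_num) hpow
    · -- trace = -1 : B³ = 1
      have htr : B.trace = -1 := by rw [hm]; norm_num
      rw [htr] at hCH
      have hB2 : B * B = -B - 1 := by rw [hCH]; module
      have hB3 : B ^ 3 = 1 := by
        have h6 : B ^ 3 = B * B * B := by noncomm_ring
        have h7 : (-B - 1) * B = -(B * B) - B := by noncomm_ring
        rw [h6, hB2, h7, hB2]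
        abel
      exact order_mem_aux (by norm_num) (hpowQ 3 hB3)
    · -- trace = 0 : B² = -1, B⁴ = 1
      have htr : B.trace = 0 := by rw [hm]; norm_num
      rw [htr] at hCH
      have hB2 : B * B = -1 := by rw [hCH]; module
      have hB4 : B ^ 4 = 1 := by
        have h6 : B ^ 4 = (B * B) * (B * B) := by noncomm_ring
        rw [h6, hB2]; simp
      exact order_mem_aux (by norm_num) (hpowQ 4 hB4)
    · -- trace = 1 : B³ = -1, B⁶ = 1
      have htr : B.trace = 1 := by rw [hm]; norm_num
      rw [htr] at hCH
      have hB2 : B * B = B - 1 := by rw [hCH]; module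
      have hB3 : B ^ 3 = -1 := by
        have h6 : B ^ 3 = B * B * B := by noncomm_ring
        have h7 : (B - 1) * B = B * B - B := by noncomm_ring
        rw [h6, hB2, h7, hB2]
        abel
      have hB6 : B ^ 6 = 1 := by
        have h8 : B ^ 6 = (B ^ 3) * (B ^ 3) := by noncomm_ring
        rw [h8, hB3]; simp
      exact order_mem_aux (by norm_num) (hpowQ 6 hB6)
    · -- trace = 2 : B = 1
      have h00 : B 0 0 = 1 := by
        have h5 : B 0 0 + B 1 1 = 2 := by rw [← htr2, hm]; norm_num
        linarith [hd00.2, hd11.2]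
      have h11 : B 1 1 = 1 := by
        have h5 : B 0 0 + B 1 1 = 2 := by rw [← htr2, hm]; norm_num
        linarith [hd00.2, hd11.2]
      have h10 : B 1 0 = 0 := by nlinarith [hcol 0]
      have h01 : B 0 1 = 0 := by nlinarith [hcol 1]
      have hBeq : B = 1 := by
        ext i j
        fin_cases i <;> fin_cases j <;>
          simp [h00, h11, h10, h01, Matrix.one_apply]
      have hpow : Q ^ 1 = 1 := hpowQ 1 (by rw [pow_one, hBeq])
      exact order_mem_aux (by norm_num) hpow
  · -- reflection case : det = -1 forces trace = 0, B² = 1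
    have hBinv : B * (B - B.trace • 1) = 1 := by
      have h2 : B * (B - B.trace • 1) = B * B - B.trace • B := by
        rw [mul_sub, mul_smul_comm, mul_one]
      rw [h2, hCH, hd]
      simp only [neg_smul, one_smul, sub_neg_eq_add]
      abel
    have hT : B.transpose = B - B.trace • 1 := by
      calc B.transpose = B.transpose * (B * (B - B.trace • 1)) := by rw [hBinv, mul_one]
        _ = (B.transpose * B) * (B - B.trace • 1) := by rw [mul_assoc]
        _ = B - B.trace • 1 := by rw [horth, one_mul]
    have htr0 : B.trace = 0 := by
      have h1 : B.transpose.trace = B.trace := Matrix.trace_transpose B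
      rw [hT] at h1
      rw [Matrix.trace_sub, Matrix.trace_smul, Matrix.trace_one] at h1
      have h2 : B.trace - B.trace * 2 = B.trace := by
        simpa [smul_eq_mul] using h1
      linarith
    rw [htr0, hd] at hCH
    have hB2 : B ^ 2 = 1 := by
      rw [pow_two, hCH]
      simp
    exact order_mem_aux (by norm_num) (hpowQ 2 hB2)
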